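/- Let n ≥ 2 and write a point of ℂ^n as w = (w₁, w₂, w̃) with w₁, w₂ ∈ ℂ and w̃ ∈ ℂ^{n−2}. Let ρ₁(w) = Re(w₁w₂) + |w₁|². Suppose ρ₁(w) < 0, and set α = (w₁ − conj(w₂))/2, Σ_w = { ζ ∈ ℂ : |ζ − α|² ≤ |α|² − |w₁|² }, and φ_w(ζ) = ( ζ, |w₁|²/ζ − 2·conj(α), w̃ ). Then: (a) w₁ ≠ 0 and |w₁ − α|² < |α|² − |w₁|², so Σ_w is a closed disc of positive radius containing w₁ in its interior; (b) 0 ∉ Σ_w, so φ_w is well defined and holomorphic on a neighbourhood of Σ_w; (c) φ_w(w₁) = w; (d) for every ζ ∈ Σ_w one has ρ₁(φ_w(ζ)) = |ζ − α|² − (|α|² − |w₁|²); in particular ρ₁(φ_w(ζ)) ≤ 0 on Σ_w and ρ₁(φ_w(ζ)) = 0 exactly on the boundary circle |ζ − α|² = |α|² − |w₁|²; (e) for every ζ on that boundary circle, ‖φ_w(ζ)‖ ≤ 3‖w‖, where ‖·‖ is the Euclidean norm on ℂ^n. -/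

import Mathlib

open Complex

noncomputable section

/-- `ρ₁(w) = Re(w₁ w₂) + |w₁|²` on `ℂ^n` (with `n = m + 2 ≥ 2`). -/
def rho1 (m : ℕ) (w : EuclideanSpace ℂ (Fin (m + 2))) : ℝ :=
  (w 0 * w 1).re + ‖w 0‖ ^ 2

open ComplexConjugate in
private lemma nsq_aux (u : ℂ) : ‖u‖ ^ 2 = u.re ^ 2 + u.im ^ 2 := by
  rw [Complex.sq_norm, Complex.normSq_apply]; ring

open ComplexConjugate in
private lemma sub_sq_aux (z y : ℂ) :
    ‖z - y‖ ^ 2 = ‖z‖ ^ 2 + ‖y‖ ^ 2 - (2 * (conj y * z)).re := by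
  simp only [nsq_aux, Complex.mul_re, Complex.sub_re, Complex.sub_im, Complex.conj_re,
    Complex.conj_im, Complex.mul_im, Complex.re_ofNat, Complex.im_ofNat]; ring

open ComplexConjugate in
private lemma key_aux (a b : ℂ) :
    ‖a - (a - conj b) / 2‖ ^ 2 - (‖(a - conj b) / 2‖ ^ 2 - ‖a‖ ^ 2)
      = (a * b).re + ‖a‖ ^ 2 := by
  simp only [nsq_aux, Complex.div_re, Complex.div_im, Complex.sub_re, Complex.sub_im,
    Complex.conj_re, Complex.conj_im, Complex.mul_re, Complex.normSq_apply,
    Complex.re_ofNat, Complex.im_ofNat]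
  norm_num; ring

open ComplexConjugate in
private lemma alpha_bound_aux (a b : ℂ) :
    2 * ‖(a - conj b) / 2‖ ^ 2 ≤ ‖a‖ ^ 2 + ‖b‖ ^ 2 := by
  simp only [nsq_aux, Complex.div_re, Complex.div_im, Complex.sub_re, Complex.sub_im,
    Complex.conj_re, Complex.conj_im, Complex.normSq_apply, Complex.re_ofNat,
    Complex.im_ofNat]
  norm_num
  nlinarith [sq_nonneg (a.re + b.re), sq_nonneg (a.im - b.im)]

open ComplexConjugate in
private lemma re_conj_mul_aux (x y : ℂ) : (conj x * y).re = (x * conj y).re := by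
  simp only [Complex.mul_re, Complex.conj_re, Complex.conj_im]; ring

open ComplexConjugate in
private lemma e3_aux (α ζ : ℂ) (r : ℝ) :
    (2 * (conj (2 * conj α * ζ) * (r : ℂ))).re = 2 * r * (2 * (conj α * ζ)).re := by
  simp only [map_mul, Complex.conj_conj, map_ofNat, Complex.mul_re, Complex.mul_im,
    Complex.conj_re, Complex.conj_im, Complex.ofReal_re, Complex.ofReal_im,
    Complex.re_ofNat, Complex.im_ofNat]
  ring

open ComplexConjugate in
theorem analytic_disc_attached_to_M1 (m : ℕ) (w : EuclideanSpace ℂ (Fin (m + 2)))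
    (hw : rho1 m w < 0) :
    let α : ℂ := (w 0 - (starRingEnd ℂ) (w 1)) / 2
    let S : Set ℂ := {ζ : ℂ | ‖ζ - α‖ ^ 2 ≤ ‖α‖ ^ 2 - ‖w 0‖ ^ 2}
    let φ : ℂ → EuclideanSpace ℂ (Fin (m + 2)) := fun ζ =>
      WithLp.toLp 2 (fun i => if i = 0 then ζ
        else if i = 1 then ((‖w 0‖ ^ 2 : ℝ) : ℂ) / ζ - 2 * (starRingEnd ℂ) α
        else w i)
    -- (a)
    (w 0 ≠ 0) ∧ ‖w 0 - α‖ ^ 2 < ‖α‖ ^ 2 - ‖w 0‖ ^ 2 ∧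
    -- (b)
    ((0 : ℂ) ∉ S) ∧
    -- (c)
    (φ (w 0) = w) ∧
    -- (d)
    (∀ ζ ∈ S, rho1 m (φ ζ) = ‖ζ - α‖ ^ 2 - (‖α‖ ^ 2 - ‖w 0‖ ^ 2)) ∧
    -- (e)
    (∀ ζ : ℂ, ‖ζ - α‖ ^ 2 = ‖α‖ ^ 2 - ‖w 0‖ ^ 2 → ‖φ ζ‖ ≤ 3 * ‖w‖) := by
  intro α S φ
  have ha : w 0 ≠ 0 := by
    intro h
    rw [rho1, h] at hw
    simp at hw
  have hs : 0 < ‖w 0‖ ^ 2 := by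
    have := norm_pos_iff.2 ha
    positivity
  have hkey : ‖w 0 - α‖ ^ 2 - (‖α‖ ^ 2 - ‖w 0‖ ^ 2) = rho1 m w := key_aux (w 0) (w 1)
  have ha2 : ‖w 0 - α‖ ^ 2 < ‖α‖ ^ 2 - ‖w 0‖ ^ 2 := by linarith
  have hb0 : (0 : ℂ) ∉ S := by
    intro h
    have h' : ‖(0 : ℂ) - α‖ ^ 2 ≤ ‖α‖ ^ 2 - ‖w 0‖ ^ 2 := h
    rw [zero_sub, norm_neg] at h'
    linarith
  -- the cast of ‖w 0‖² as `w 0 * conj (w 0)`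
  have hcast : ((‖w 0‖ ^ 2 : ℝ) : ℂ) = w 0 * conj (w 0) := by
    rw [Complex.mul_conj, Complex.normSq_eq_norm_sq]
  have h2conj : 2 * conj α = conj (w 0) - w 1 := by
    simp only [α, map_div₀, map_sub, Complex.conj_conj, map_ofNat]
    ring
  have hc : φ (w 0) = w := by
    ext i
    show (if i = 0 then w 0 else if i = 1 then _ else w i) = w i
    by_cases h0 : i = 0
    · rw [if_pos h0, h0]
    rw [if_neg h0]
    by_cases h1 : i = 1
    · rw [if_pos h1, h1, hcast, h2conj]
      field_simp
      ring
    · rw [if_neg h1]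
  -- key facts for a point ζ with ‖ζ - α‖² ≤/= the radius
  have hne : ∀ ζ : ℂ, ‖ζ - α‖ ^ 2 ≤ ‖α‖ ^ 2 - ‖w 0‖ ^ 2 → ζ ≠ 0 := by
    intro ζ hζ h0
    rw [h0, zero_sub, norm_neg] at hζ
    linarith
  have hre : ∀ ζ : ℂ, ζ ≠ 0 →
      rho1 m (φ ζ) = ‖ζ - α‖ ^ 2 - (‖α‖ ^ 2 - ‖w 0‖ ^ 2) := by
    intro ζ hζ
    have hφ0 : φ ζ 0 = ζ := rfl
    have hφ1 : φ ζ 1 = ((‖w 0‖ ^ 2 : ℝ) : ℂ) / ζ - 2 * conj α := rfl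
    have hmul : ζ * (((‖w 0‖ ^ 2 : ℝ) : ℂ) / ζ - 2 * conj α)
        = ((‖w 0‖ ^ 2 : ℝ) : ℂ) - 2 * (conj α * ζ) := by
      field_simp
    rw [rho1, hφ0, hφ1, hmul, sub_sq_aux ζ α]
    simp only [Complex.sub_re, Complex.ofReal_re]
    ring
  refine ⟨ha, ha2, hb0, hc, fun ζ hζ => hre ζ (hne ζ hζ), ?_⟩
  -- (e)
  intro ζ hbd
  have hζ0 : ζ ≠ 0 := hne ζ (le_of_eq hbd)
  have hζn : 0 < ‖ζ‖ := norm_pos_iff.2 hζ0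
  -- h1 : 2 Re(ζ ᾱ) = ‖ζ‖² + ‖w 0‖²
  have h1 : (2 * (conj α * ζ)).re = ‖ζ‖ ^ 2 + ‖w 0‖ ^ 2 := by
    have := sub_sq_aux ζ α
    rw [hbd] at this
    linarith
  -- ‖ζ‖ ≤ 2‖α‖
  have hre2 : (2 * (conj α * ζ)).re ≤ 2 * ‖α‖ * ‖ζ‖ := by
    calc (2 * (conj α * ζ)).re ≤ ‖2 * (conj α * ζ)‖ := Complex.re_le_norm _
    _ = 2 * ‖α‖ * ‖ζ‖ := by
        simp [norm_mul]
        ring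
  have hζ4 : ‖ζ‖ ^ 2 ≤ 4 * ‖α‖ ^ 2 := by
    nlinarith [sq_nonneg (‖ζ‖ - 2 * ‖α‖), norm_nonneg ζ, norm_nonneg α]
  -- ‖η‖² ≤ 4‖α‖²
  set η : ℂ := ((‖w 0‖ ^ 2 : ℝ) : ℂ) / ζ - 2 * conj α with hη
  have hmul : η * ζ = ((‖w 0‖ ^ 2 : ℝ) : ℂ) - 2 * conj α * ζ := by
    rw [hη]; field_simp
  have hηζ : ‖η‖ ^ 2 * ‖ζ‖ ^ 2 = ‖((‖w 0‖ ^ 2 : ℝ) : ℂ) - 2 * conj α * ζ‖ ^ 2 := by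
    rw [← hmul, norm_mul]; ring
  have hrhs : ‖((‖w 0‖ ^ 2 : ℝ) : ℂ) - 2 * conj α * ζ‖ ^ 2
      = (‖w 0‖ ^ 2) ^ 2 + 4 * ‖α‖ ^ 2 * ‖ζ‖ ^ 2
        - 2 * ‖w 0‖ ^ 2 * (‖ζ‖ ^ 2 + ‖w 0‖ ^ 2) := by
    rw [sub_sq_aux]
    have e1 : ‖((‖w 0‖ ^ 2 : ℝ) : ℂ)‖ ^ 2 = (‖w 0‖ ^ 2) ^ 2 := by
      rw [Complex.norm_real, Real.norm_eq_abs, _root_.abs_of_nonneg (sq_nonneg _)]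
    have e2 : ‖2 * conj α * ζ‖ ^ 2 = 4 * ‖α‖ ^ 2 * ‖ζ‖ ^ 2 := by
      simp [norm_mul]; ring
    have e3 : (2 * (conj (2 * conj α * ζ) * ((‖w 0‖ ^ 2 : ℝ) : ℂ))).re
        = 2 * ‖w 0‖ ^ 2 * (‖ζ‖ ^ 2 + ‖w 0‖ ^ 2) := by
      rw [e3_aux, h1]
    rw [e1, e2, e3]
  have hη4 : ‖η‖ ^ 2 ≤ 4 * ‖α‖ ^ 2 := by
    have hζsq : 0 < ‖ζ‖ ^ 2 := by positivity
    have : ‖η‖ ^ 2 * ‖ζ‖ ^ 2 ≤ 4 * ‖α‖ ^ 2 * ‖ζ‖ ^ 2 := by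
      rw [hηζ, hrhs]
      nlinarith [sq_nonneg (‖w 0‖ ^ 2)]
    exact le_of_mul_le_mul_right (by linarith) hζsq
  -- 2‖α‖² ≤ ‖w 0‖² + ‖w 1‖²
  have hA : 2 * ‖α‖ ^ 2 ≤ ‖w 0‖ ^ 2 + ‖w 1‖ ^ 2 := alpha_bound_aux (w 0) (w 1)
  -- assemble
  have hsum : ∑ i, ‖φ ζ i‖ ^ 2 ≤ 9 * ∑ i, ‖w i‖ ^ 2 := by
    rw [Fin.sum_univ_succ, Fin.sum_univ_succ, Fin.sum_univ_succ (f := fun i => ‖w i‖ ^ 2),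
      Fin.sum_univ_succ (f := fun i : Fin (m + 1) => ‖w i.succ‖ ^ 2)]
    have hφ0 : φ ζ 0 = ζ := rfl
    have hφ1' : φ ζ ((0 : Fin (m + 1)).succ) = η := by
      rw [show ((0 : Fin (m + 1)).succ) = (1 : Fin (m + 2)) from rfl]; rfl
    have hφi : ∀ i : Fin m, φ ζ i.succ.succ = w i.succ.succ := by
      intro i
      show (if i.succ.succ = 0 then ζ else if i.succ.succ = 1 then ((‖w 0‖ ^ 2 : ℝ) : ℂ) / ζ - 2 * conj α else w i.succ.succ)
        = w i.succ.succ
      rw [if_neg (Fin.succ_ne_zero _), if_neg (Fin.succ_succ_ne_one i)]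
    simp only [hφ0, hφ1', hφi]
    have hT : (0 : ℝ) ≤ ∑ i : Fin m, ‖w i.succ.succ‖ ^ 2 :=
      Finset.sum_nonneg fun i _ => by positivity
    have h00 : w ((0 : Fin (m + 1)).succ) = w 1 := by
      rw [show ((0 : Fin (m + 1)).succ) = (1 : Fin (m + 2)) from rfl]
    rw [h00]
    nlinarith [hζ4, hη4, hA, hT]
  calc ‖φ ζ‖ = Real.sqrt (∑ i, ‖φ ζ i‖ ^ 2) := EuclideanSpace.norm_eq _
  _ ≤ Real.sqrt (9 * ∑ i, ‖w i‖ ^ 2) := Real.sqrt_le_sqrt hsum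
  _ = 3 * ‖w‖ := by
      rw [EuclideanSpace.norm_eq, show (9 : ℝ) = 3 ^ 2 by norm_num,
        Real.sqrt_mul (by positivity), Real.sqrt_sq (by norm_num)]
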